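/- Exponential contraction of two solutions (pathwise form): let ε > 0, a ∈ ℝ, let b : [a, ∞) → ℝ be continuous, and let l¹, l² : [a, ∞) → ℝ be continuous functions such that for i = 1, 2 and all a ≤ s ≤ t one has l^i_t = l^i_s + 2(b_t − b_s) − 2ε ∫_s^t sinh(l^i_u) du. If l²_{s₀} ≥ l¹_{s₀} for some s₀ ≥ a, then for every t ≥ s₀ one has l²_t ≥ l¹_t and tanh((l²_t − l¹_t)/4) ≤ e^{−2ε(t − s₀)} · tanh((l²_{s₀} − l¹_{s₀})/4). -/

import Mathlib

open MeasureTheory intervalIntegral Real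

private lemma sinh_addsub (p q : ℝ) :
    Real.sinh (p + q) - Real.sinh (p - q) = 2 * Real.cosh p * Real.sinh q := by
  rw [Real.sinh_add, Real.sinh_sub]; ring

/-- Exponential contraction of two solutions (pathwise form): if `l¹, l²` are continuous
on `[a, ∞)` and both satisfy `l t = l s + 2 (b t − b s) − 2ε ∫_s^t sinh (l u) du` for all
`a ≤ s ≤ t`, and `l¹ s₀ ≤ l² s₀` for some `s₀ ≥ a`, then for every `t ≥ s₀` one has
`l¹ t ≤ l² t` and `tanh ((l² t − l¹ t)/4) ≤ e^{−2ε(t − s₀)} tanh ((l² s₀ − l¹ s₀)/4)`. -/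
theorem exponential_contraction
    (ε a : ℝ) (hε : 0 < ε)
    (b l₁ l₂ : ℝ → ℝ)
    (hb : ContinuousOn b (Set.Ici a))
    (hl₁ : ContinuousOn l₁ (Set.Ici a)) (hl₂ : ContinuousOn l₂ (Set.Ici a))
    (heq₁ : ∀ s t : ℝ, a ≤ s → s ≤ t →
      l₁ t = l₁ s + 2 * (b t - b s) - 2 * ε * ∫ u in s..t, Real.sinh (l₁ u))
    (heq₂ : ∀ s t : ℝ, a ≤ s → s ≤ t →
      l₂ t = l₂ s + 2 * (b t - b s) - 2 * ε * ∫ u in s..t, Real.sinh (l₂ u))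
    (s₀ : ℝ) (hs₀ : a ≤ s₀) (hinit : l₁ s₀ ≤ l₂ s₀) :
    ∀ t : ℝ, s₀ ≤ t →
      l₁ t ≤ l₂ t ∧
      Real.tanh ((l₂ t - l₁ t) / 4)
        ≤ Real.exp (-2 * ε * (t - s₀)) * Real.tanh ((l₂ s₀ - l₁ s₀) / 4) := by
  set d : ℝ → ℝ := fun t => l₂ t - l₁ t with hd_def
  set f : ℝ → ℝ := fun u => Real.sinh (l₂ u) - Real.sinh (l₁ u) with hf_def
  set c : ℝ → ℝ := fun u => Real.cosh ((l₁ u + l₂ u) / 2) with hc_def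
  have hfc : ContinuousOn f (Set.Ici a) :=
    (Real.continuous_sinh.comp_continuousOn hl₂).sub
      (Real.continuous_sinh.comp_continuousOn hl₁)
  have hcc : ContinuousOn c (Set.Ici a) :=
    Real.continuous_cosh.comp_continuousOn ((hl₁.add hl₂).div_const 2)
  have hdc : ContinuousOn d (Set.Ici a) := hl₂.sub hl₁
  have hsub : ∀ x : ℝ, s₀ ≤ x → Set.uIcc s₀ x ⊆ Set.Ici a := by
    intro x hx
    rw [Set.uIcc_of_le hx]
    exact fun y hy => le_trans hs₀ hy.1
  have hint : ∀ (g : ℝ → ℝ), ContinuousOn g (Set.Ici a) → ∀ x, s₀ ≤ x →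
      IntervalIntegrable g volume s₀ x := fun g hg x hx =>
    (hg.mono (hsub x hx)).intervalIntegrable
  -- integral equation for the difference
  have hdeq : ∀ t, s₀ ≤ t → d t = d s₀ - 2 * ε * ∫ u in s₀..t, f u := by
    intro t ht
    have h1 := heq₁ s₀ t hs₀ ht
    have h2 := heq₂ s₀ t hs₀ ht
    have hi : (∫ u in s₀..t, f u)
        = (∫ u in s₀..t, Real.sinh (l₂ u)) - ∫ u in s₀..t, Real.sinh (l₁ u) :=
      intervalIntegral.integral_sub
        (hint _ (Real.continuous_sinh.comp_continuousOn hl₂) t ht)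
        (hint _ (Real.continuous_sinh.comp_continuousOn hl₁) t ht)
    show l₂ t - l₁ t = (l₂ s₀ - l₁ s₀) - 2 * ε * ∫ u in s₀..t, f u
    rw [h1, h2, hi]; ring
  -- FTC helper
  have hftc : ∀ (g : ℝ → ℝ), ContinuousOn g (Set.Ici a) → ∀ x, s₀ ≤ x →
      HasDerivWithinAt (fun t => ∫ u in s₀..t, g u) (g x) (Set.Ici x) x := by
    intro g hg x hx
    have hax : a ≤ x := le_trans hs₀ hx
    refine intervalIntegral.integral_hasDerivWithinAt_right (hint g hg x hx)
      (s := Set.Ici x) (t := Set.Ioi x) ?_ ?_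
    · exact ⟨Set.Ici a,
        Filter.mem_of_superset self_mem_nhdsWithin
          (fun y hy => le_trans hax (le_of_lt hy)),
        hg.aestronglyMeasurable measurableSet_Ici⟩
    · exact ((hg x hax).mono (fun y hy => le_trans hax (le_of_lt hy)))
  -- derivative of d
  have hdD : ∀ x, s₀ ≤ x →
      HasDerivWithinAt d (-(2 * ε * f x)) (Set.Ici x) x := by
    intro x hx
    have h := ((hftc f hfc x hx).const_mul (2 * ε)).const_sub (d s₀)
    exact h.congr (fun y hy => hdeq y (le_trans hx hy)) (hdeq x hx)
  set C : ℝ → ℝ := fun t => ∫ u in s₀..t, c u with hC_def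
  set Φ : ℝ → ℝ :=
    fun t => Real.sinh (d t / 4) * Real.exp (2 * ε * C t) / Real.cosh (d t / 4)
    with hΦ_def
  -- key algebraic identity for f
  have hfx : ∀ x : ℝ, f x = 4 * c x * Real.sinh (d x / 4) * Real.cosh (d x / 4) := by
    intro x
    have hkey := sinh_addsub ((l₁ x + l₂ x) / 2) ((l₂ x - l₁ x) / 2)
    rw [show (l₁ x + l₂ x) / 2 + (l₂ x - l₁ x) / 2 = l₂ x by ring,
      show (l₁ x + l₂ x) / 2 - (l₂ x - l₁ x) / 2 = l₁ x by ring] at hkey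
    have h24 : Real.sinh ((l₂ x - l₁ x) / 2)
        = 2 * Real.sinh ((l₂ x - l₁ x) / 4) * Real.cosh ((l₂ x - l₁ x) / 4) := by
      rw [show (l₂ x - l₁ x) / 2 = 2 * ((l₂ x - l₁ x) / 4) by ring, Real.sinh_two_mul]
    show Real.sinh (l₂ x) - Real.sinh (l₁ x)
        = 4 * Real.cosh ((l₁ x + l₂ x) / 2) * Real.sinh ((l₂ x - l₁ x) / 4)
          * Real.cosh ((l₂ x - l₁ x) / 4)
    rw [hkey, h24]; ring
  -- Φ has zero right derivative
  have hΦderiv : ∀ x, s₀ ≤ x → HasDerivWithinAt Φ 0 (Set.Ici x) x := by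
    intro x hx
    have hD4 : HasDerivWithinAt (fun t => d t / 4) (-(2 * ε * f x) / 4)
        (Set.Ici x) x := (hdD x hx).div_const 4
    have hS := hD4.sinh
    have hCh := hD4.cosh
    have hE : HasDerivWithinAt (fun t => Real.exp (2 * ε * C t))
        (Real.exp (2 * ε * C x) * (2 * ε * c x)) (Set.Ici x) x :=
      ((hftc c hcc x hx).const_mul (2 * ε)).exp
    have hΦ' := (hS.mul hE).div hCh (Real.cosh_pos (d x / 4)).ne'
    have hpyth := Real.cosh_sq_sub_sinh_sq (d x / 4)
    refine hΦ'.congr_deriv ?_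
    rw [hfx x, div_eq_zero_iff]
    left
    simp only [Pi.mul_apply]
    linear_combination (-(2 * ε * c x * Real.sinh (d x / 4) * Real.cosh (d x / 4)
      * Real.exp (2 * ε * C x))) * hpyth
  intro T hT
  have hIccsub : Set.Icc s₀ T ⊆ Set.Ici a := fun y hy => le_trans hs₀ hy.1
  -- continuity of Φ on [s₀, T]
  have hCcont : ContinuousOn C (Set.Icc s₀ T) := by
    have := intervalIntegral.continuousOn_primitive_interval'
      (hint c hcc T hT) (Set.left_mem_uIcc (a := s₀) (b := T))
    rwa [Set.uIcc_of_le hT] at this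
  have hdcont : ContinuousOn (fun t => d t / 4) (Set.Icc s₀ T) :=
    (hdc.mono hIccsub).div_const 4
  have hΦcont : ContinuousOn Φ (Set.Icc s₀ T) := by
    refine ContinuousOn.div ?_ ?_ (fun y _ => (Real.cosh_pos (d y / 4)).ne')
    · exact (Real.continuous_sinh.comp_continuousOn hdcont).mul
        (Real.continuous_exp.comp_continuousOn (continuousOn_const.mul hCcont))
    · exact Real.continuous_cosh.comp_continuousOn hdcont
  have hconst : Φ T = Φ s₀ :=
    constant_of_has_deriv_right_zero hΦcont (fun x hx => hΦderiv x hx.1) T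
      (Set.right_mem_Icc.2 hT)
  have hCs0 : C s₀ = 0 := intervalIntegral.integral_same
  have hΦs0 : Φ s₀ = Real.tanh (d s₀ / 4) := by
    simp only [hΦ_def, hCs0, mul_zero, Real.exp_zero, mul_one,
      Real.tanh_eq_sinh_div_cosh]
  have hEpos : (0 : ℝ) < Real.exp (2 * ε * C T) := Real.exp_pos _
  have h2 : Real.tanh (d T / 4) = Real.tanh (d s₀ / 4) * Real.exp (-(2 * ε * C T)) := by
    have h1 : Real.sinh (d T / 4) * Real.exp (2 * ε * C T) / Real.cosh (d T / 4)
        = Real.tanh (d s₀ / 4) := by rw [← hΦs0]; exact hconst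
    rw [Real.tanh_eq_sinh_div_cosh, Real.exp_neg, ← h1]
    field_simp
  have htanh0 : 0 ≤ Real.tanh (d s₀ / 4) := by
    rw [Real.tanh_eq_sinh_div_cosh]
    refine div_nonneg (Real.sinh_nonneg_iff.2 ?_) (Real.cosh_pos _).le
    have : (0 : ℝ) ≤ l₂ s₀ - l₁ s₀ := by linarith
    show (0 : ℝ) ≤ (l₂ s₀ - l₁ s₀) / 4
    linarith
  have hT0 : 0 ≤ Real.tanh (d T / 4) := by
    rw [h2]; exact mul_nonneg htanh0 (Real.exp_pos _).le
  have hdT0 : 0 ≤ l₂ T - l₁ T := by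
    have hs : 0 ≤ Real.sinh (d T / 4) := by
      by_contra h
      push_neg at h
      have := div_neg_of_neg_of_pos h (Real.cosh_pos (d T / 4))
      rw [← Real.tanh_eq_sinh_div_cosh] at this
      linarith
    have h4 := Real.sinh_nonneg_iff.1 hs
    change 0 ≤ (l₂ T - l₁ T) / 4 at h4
    linarith
  have hCT : T - s₀ ≤ C T := by
    have h1 : (∫ _ in s₀..T, (1 : ℝ)) ≤ ∫ u in s₀..T, c u :=
      intervalIntegral.integral_mono_on hT intervalIntegrable_const
        (hint c hcc T hT) (fun x _ => Real.one_le_cosh _)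
    simpa using h1
  refine ⟨by linarith, ?_⟩
  calc Real.tanh (d T / 4) = Real.tanh (d s₀ / 4) * Real.exp (-(2 * ε * C T)) := h2
    _ ≤ Real.tanh (d s₀ / 4) * Real.exp (-2 * ε * (T - s₀)) := by
        refine mul_le_mul_of_nonneg_left (Real.exp_le_exp.2 ?_) htanh0
        nlinarith
    _ = Real.exp (-2 * ε * (T - s₀)) * Real.tanh (d s₀ / 4) := mul_comm _ _
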